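/- Given a brick B ⊆ ℝ^d, a regular Borel measure η on ℝ^d, and δ > 0, there exists a partition of B into subbricks of diameter less than δ together with a shrinking (β̃_{i,j}) of the partition such that η of the interior of B minus the union ⋃ β̃_{i,j} is less than δ. -/

import Mathlib

open MeasureTheory Set
lemma countable_bad (d : ℕ) (a b : Fin d → ℝ) (η : Measure (Fin d → ℝ))
    (hfin : η (Set.Icc a b) ≠ ⊤) (t : Fin d) :
    {c : ℝ | η {x | x ∈ Set.Icc a b ∧ x t = c} ≠ 0}.Countable := by
  have key := Measure.countable_meas_pos_of_disjoint_of_meas_iUnion_ne_top η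
    (As := fun c : ℝ => {x | x ∈ Set.Icc a b ∧ x t = c})
    (fun c => by
      have : {x : Fin d → ℝ | x ∈ Set.Icc a b ∧ x t = c}
          = Set.Icc a b ∩ ((fun x : Fin d → ℝ => x t) ⁻¹' {c}) := by
        ext x; simp [Set.mem_inter_iff]
      show MeasurableSet {x : Fin d → ℝ | x ∈ Set.Icc a b ∧ x t = c}
      rw [this]
      exact measurableSet_Icc.inter ((measurable_pi_apply t) (measurableSet_singleton c)))
    (fun c c' hcc' => by
      simp only [Function.onFun, Set.disjoint_left]
      rintro x ⟨-, h1⟩ ⟨-, h2⟩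
      exact hcc' (h1 ▸ h2 ▸ rfl))
    (by
      refine ne_top_of_le_ne_top hfin (measure_mono ?_)
      rintro x ⟨_, ⟨c, rfl⟩, hx, -⟩
      exact hx)
  refine key.mono fun c hc => ?_
  simpa [pos_iff_ne_zero] using hc

-- Lemma B: choice of a good shift
lemma exists_good_shift (d : ℕ) (a b : Fin d → ℝ) (η : Measure (Fin d → ℝ))
    (hfin : η (Set.Icc a b) ≠ ⊤) (t : Fin d) (N : ℕ) (h : ℝ) (hh : 0 < h) :
    ∃ s ∈ Set.Ioo 0 (h / 2), ∀ i ∈ Finset.Icc 1 N,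
      η {x | x ∈ Set.Icc a b ∧ x t = a t + i * h + s} = 0 := by
  set badC : Set ℝ := {c : ℝ | η {x | x ∈ Set.Icc a b ∧ x t = c} ≠ 0} with hbadC
  have hcount : badC.Countable := countable_bad d a b η hfin t
  set Bad : Set ℝ := ⋃ i ∈ Finset.Icc 1 N, (fun c => c - (a t + i * h)) '' badC with hBad
  have hBadCount : Bad.Countable :=
    Set.Countable.biUnion (Finset.Icc 1 N : Finset ℕ).countable_toSet
      (fun i _ => hcount.image _)
  have hIoo : ¬ (Set.Ioo (0:ℝ) (h/2) ⊆ Bad) := by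
    intro hsub
    have h1 : (Set.Ioo (0:ℝ) (h/2)).Countable := hBadCount.mono hsub
    have h2 := Cardinal.mk_Ioo_real (show (0:ℝ) < h/2 by linarith)
    have := h1.le_aleph0
    rw [h2] at this
    exact absurd this (not_le.2 Cardinal.aleph0_lt_continuum)
  obtain ⟨s, hs1, hs2⟩ := Set.not_subset.1 hIoo
  refine ⟨s, hs1, fun i hi => ?_⟩
  by_contra hne
  exact hs2 (Set.mem_biUnion hi ⟨a t + i * h + s, hne, by ring⟩)

-- Lemma C: locating a point strictly between consecutive grid points
lemma exists_between_grid (f : ℕ → ℝ) (N : ℕ) (hmono : ∀ i ≤ N, f i < f (i + 1)) (x : ℝ)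
    (h0 : f 0 < x) (h1 : x < f (N + 1)) (hne : ∀ i, 1 ≤ i → i ≤ N → x ≠ f i) :
    ∃ i ≤ N, f i < x ∧ x < f (i + 1) := by
  classical
  set P : ℕ → Prop := fun j => f j < x with hP
  set i := Nat.findGreatest P N with hi
  have hiN : i ≤ N := Nat.findGreatest_le N
  have hPi : P i := Nat.findGreatest_spec (Nat.zero_le N) h0
  refine ⟨i, hiN, hPi, ?_⟩
  rcases eq_or_lt_of_le hiN with heq | hlt
  · exact heq ▸ h1
  · have hnP : ¬ P (i + 1) := Nat.findGreatest_is_greatest (Nat.lt_succ_self i) hlt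
    have hle : x ≤ f (i + 1) := le_of_not_gt hnP
    exact lt_of_le_of_ne hle (hne (i+1) (Nat.succ_le_succ (Nat.zero_le i)) hlt)


/-- Given a brick `B = Icc a b ⊆ ℝ^d`, a regular Borel measure `η`, and `δ > 0`, there is a
grid partition of `B` into subbricks of diameter `< δ` and a shrinking `(β̃_i)` of the
partition with `η((B \ ⋃ β̃_i)°) < δ`. -/
theorem exists_fine_stratification (d : ℕ) (a b : Fin d → ℝ) (hab : ∀ t, a t < b t)
    (η : Measure (Fin d → ℝ)) [η.Regular] (δ : ℝ) (hδ : 0 < δ) :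
    ∃ (r : Fin d → ℕ) (lam lam' lam'' : Fin d → ℕ → ℝ),
      (∀ t, lam t 0 = a t) ∧ (∀ t, lam t (r t + 1) = b t) ∧
      (∀ t, ∀ i ≤ r t, lam t i < lam t (i + 1)) ∧
      (∀ t, ∀ i ≤ r t,
        lam t i < lam' t i ∧ lam' t i ≤ lam'' t (i + 1) ∧ lam'' t (i + 1) < lam t (i + 1)) ∧
      (∀ i : Fin d → ℕ, (∀ t, i t ≤ r t) →
        Metric.diam {x : Fin d → ℝ | ∀ t, lam t (i t) ≤ x t ∧ x t ≤ lam t (i t + 1)} < δ) ∧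
      η (interior (Set.Icc a b \
        ⋃ i ∈ {i : Fin d → ℕ | ∀ t, i t ≤ r t},
          {x : Fin d → ℝ | ∀ t, lam' t (i t) ≤ x t ∧ x t ≤ lam'' t (i t + 1)}))
        < ENNReal.ofReal δ := by
  classical
  have hfin : η (Set.Icc a b) ≠ ⊤ := (isCompact_Icc.measure_lt_top).ne
  -- choose the number of subdivisions
  set M : ℝ := 1 + ∑ t, (b t - a t) with hM
  have hM0 : 0 < M := by
    have : 0 ≤ ∑ t, (b t - a t) :=
      Finset.sum_nonneg fun t _ => le_of_lt (sub_pos.2 (hab t))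
    linarith
  have hMt : ∀ t, b t - a t ≤ M := by
    intro t
    have h1 : b t - a t ≤ ∑ x, (b x - a x) := Finset.single_le_sum (f := fun t => b t - a t)
      (fun t _ => le_of_lt (sub_pos.2 (hab t))) (Finset.mem_univ t)
    linarith
  obtain ⟨N, hN⟩ := exists_nat_gt (4 * M / δ)
  have hN1 : (0:ℝ) < N + 1 := by positivity
  -- side length of the uniform grid
  set h : Fin d → ℝ := fun t => (b t - a t) / (N + 1) with hh
  have hh0 : ∀ t, 0 < h t := fun t => div_pos (sub_pos.2 (hab t)) hN1
  have hb : ∀ t, b t = a t + (N + 1) * h t := by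
    intro t; simp only [hh]; field_simp <;> ring
  have h2hδ : ∀ t, 2 * h t ≤ δ / 2 := by
    intro t
    have h1 : 4 * M < δ * (N + 1) := by
      rw [div_lt_iff₀ hδ] at hN
      nlinarith
    have h2 : 2 * h t = 2 * (b t - a t) / (N + 1) := by rw [hh]; ring
    rw [h2, div_le_iff₀ hN1]
    nlinarith [hMt t]
  -- choose good shifts
  have hchoice : ∀ t, ∃ s ∈ Set.Ioo 0 (h t / 2), ∀ i ∈ Finset.Icc 1 N,
      η {x | x ∈ Set.Icc a b ∧ x t = a t + i * h t + s} = 0 :=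
    fun t => exists_good_shift d a b η hfin t N (h t) (hh0 t)
  choose s hsIoo hsnull using hchoice
  -- the grid
  set lam : Fin d → ℕ → ℝ := fun t i =>
    if i = 0 then a t else if N + 1 ≤ i then b t else a t + i * h t + s t with hlam
  have hlam0 : ∀ t, lam t 0 = a t := fun t => by simp [hlam]
  have hlamtop : ∀ t, lam t (N + 1) = b t := fun t => by simp [hlam]
  have hlammid : ∀ t, ∀ i, 1 ≤ i → i ≤ N → lam t i = a t + i * h t + s t := by
    intro t i h1 h2
    simp only [hlam]
    rw [if_neg (by omega), if_neg (by omega)]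
  -- gap bounds
  have gap : ∀ t, ∀ i ≤ N, h t / 2 ≤ lam t (i + 1) - lam t i ∧
      lam t (i + 1) - lam t i ≤ 2 * h t := by
    intro t i hi
    obtain ⟨hs0, hs1⟩ := hsIoo t
    have hht := hh0 t
    rcases Nat.eq_zero_or_pos i with rfl | hi1
    · rw [hlam0]
      rcases Nat.eq_zero_or_pos N with rfl | hN1'
      · rw [hlamtop t, hb t]
        constructor <;> push_cast <;> linarith
      · rw [hlammid t 1 le_rfl hN1']
        constructor <;> push_cast <;> linarith
    · rcases eq_or_lt_of_le hi with rfl | hiN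
      · rw [hlamtop t, hlammid t i hi1 le_rfl, hb t]
        constructor <;> push_cast <;> linarith
      · rw [hlammid t i hi1 hi, hlammid t (i + 1) (by omega) (by omega)]
        constructor <;> push_cast <;> linarith
  have hmono : ∀ t, ∀ i ≤ N, lam t i < lam t (i + 1) := by
    intro t i hi
    have := (gap t i hi).1
    have := hh0 t
    linarith
  -- the shrinking parameters
  set ε : ℕ → Fin d → ℝ := fun n t => h t / (4 * (n + 1)) with hε
  have hε0 : ∀ n t, 0 < ε n t := fun n t => by
    have := hh0 t; positivity
  have hεmono : ∀ t, ∀ m n : ℕ, m ≤ n → ε n t ≤ ε m t := by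
    intro t m n hmn
    apply div_le_div_of_nonneg_left (le_of_lt (hh0 t)) (by positivity)
    have : (m:ℝ) ≤ n := by exact_mod_cast hmn
    linarith
  have hε2 : ∀ n t, 2 * ε n t ≤ h t / 2 := by
    intro n t
    have h1 := hεmono t 0 n (Nat.zero_le n)
    have h2 : ε 0 t = h t / 4 := by simp [hε]
    rw [h2] at h1
    linarith
  -- the decreasing family of open sets
  set S : ℕ → Set (Fin d → ℝ) := fun n =>
    interior (Set.Icc a b \
      ⋃ i ∈ {i : Fin d → ℕ | ∀ t, i t ≤ (fun _ : Fin d => N) t},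
        {x : Fin d → ℝ | ∀ t, lam t (i t) + ε n t ≤ x t ∧ x t ≤ lam t (i t + 1) - ε n t})
    with hS
  have hSanti : Antitone S := by
    intro m n hmn
    apply interior_mono
    apply diff_subset_diff_right
    refine Set.iUnion₂_mono fun i hi => ?_
    intro x hx t
    have h1 := (hx t).1
    have h2 := (hx t).2
    have h3 := hεmono t m n hmn
    constructor <;> linarith
  have hSsub : ∀ n, S n ⊆ Set.Icc a b := fun n =>
    (interior_subset).trans diff_subset
  -- the exceptional null set
  set H : Set (Fin d → ℝ) := ⋃ (t : Fin d), ⋃ i ∈ Finset.Icc 1 N,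
    {x | x ∈ Set.Icc a b ∧ x t = a t + i * h t + s t} with hH
  have hHnull : η H = 0 := by
    refine measure_iUnion_null fun t => ?_
    refine (measure_biUnion_null_iff (Finset.Icc 1 N : Finset ℕ).countable_toSet).2 ?_
    exact fun i hi => hsnull t i hi
  -- the intersection is contained in H
  have hInter : (⋂ n, S n) ⊆ H := by
    intro x hx
    simp only [Set.mem_iInter] at hx
    have hxIcc : x ∈ Set.Icc a b := hSsub 0 (hx 0)
    have hint : interior (Set.Icc a b) = Set.pi Set.univ fun t => Set.Ioo (a t) (b t) := by
      rw [← Set.pi_univ_Icc, interior_pi_set Set.finite_univ]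
      simp
    have hxint : x ∈ Set.pi Set.univ fun t => Set.Ioo (a t) (b t) := by
      rw [← hint]
      exact interior_mono diff_subset (hx 0)
    by_contra hxH
    have hne : ∀ t, ∀ i, 1 ≤ i → i ≤ N → x t ≠ lam t i := by
      intro t i h1 h2 heq
      apply hxH
      exact Set.mem_iUnion.2 ⟨t, Set.mem_biUnion (Finset.mem_Icc.2 ⟨h1, h2⟩)
        ⟨hxIcc, by rw [heq, hlammid t i h1 h2]⟩⟩
    have hloc : ∀ t, ∃ j ≤ N, lam t j < x t ∧ x t < lam t (j + 1) := by
      intro t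
      refine exists_between_grid (lam t) N (hmono t) (x t) ?_ ?_ ?_
      · rw [hlam0]; exact (hxint t (Set.mem_univ t)).1
      · rw [hlamtop]; exact (hxint t (Set.mem_univ t)).2
      · exact fun i h1 h2 => hne t i h1 h2
    choose j hjN hj1 hj2 using hloc
    -- find n making epsilon small enough on every coordinate
    have hmarg : ∀ t, ∃ n : ℕ, ε n t ≤ x t - lam t (j t) ∧ ε n t ≤ lam t (j t + 1) - x t := by
      intro t
      set m := min (x t - lam t (j t)) (lam t (j t + 1) - x t) with hm
      have hm0 : 0 < m := lt_min (by linarith [hj1 t]) (by linarith [hj2 t])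
      obtain ⟨n0, hn0⟩ := exists_nat_gt (h t / (4 * m))
      have hεle : ε n0 t ≤ m := by
        rw [hε]
        rw [div_le_iff₀ (by positivity)]
        rw [div_lt_iff₀ (by positivity)] at hn0
        nlinarith
      exact ⟨n0, le_trans hεle (min_le_left _ _), le_trans hεle (min_le_right _ _)⟩
    choose nt hnt1 hnt2 using hmarg
    set n := Finset.univ.sup nt with hn
    have hxU : x ∈ ⋃ i ∈ {i : Fin d → ℕ | ∀ t, i t ≤ (fun _ : Fin d => N) t},
        {x : Fin d → ℝ | ∀ t, lam t (i t) + ε n t ≤ x t ∧ x t ≤ lam t (i t + 1) - ε n t} := by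
      refine Set.mem_biUnion (show j ∈ _ from fun t => hjN t) ?_
      intro t
      have hle : ε n t ≤ ε (nt t) t :=
        hεmono t (nt t) n (Finset.le_sup (Finset.mem_univ t))
      constructor
      · linarith [hnt1 t]
      · linarith [hnt2 t]
    have := (interior_subset (hx n)).2
    exact this hxU
  -- continuity from above
  have htend : Filter.Tendsto (η ∘ S) Filter.atTop (nhds (η (⋂ n, S n))) :=
    tendsto_measure_iInter_atTop
      (fun n => (isOpen_interior.measurableSet).nullMeasurableSet)
      hSanti
      ⟨0, ne_top_of_le_ne_top hfin (measure_mono (hSsub 0))⟩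
  have hzero : η (⋂ n, S n) = 0 :=
    le_antisymm (hHnull ▸ measure_mono hInter) zero_le
  rw [hzero] at htend
  have hpos : (0 : ENNReal) < ENNReal.ofReal δ := ENNReal.ofReal_pos.2 hδ
  obtain ⟨n, hn⟩ := (htend.eventually_lt_const hpos).exists
  -- assemble the answer
  refine ⟨fun _ => N, lam, fun t i => lam t i + ε n t, fun t i => lam t i - ε n t,
    hlam0, fun t => hlamtop t, fun t i hi => hmono t i hi, ?_, ?_, ?_⟩
  · intro t i hi
    have hg := (gap t i hi).1
    have he := hε0 n t
    have he2 := hε2 n t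
    show lam t i < lam t i + ε n t ∧ lam t i + ε n t ≤ lam t (i + 1) - ε n t ∧
      lam t (i + 1) - ε n t < lam t (i + 1)
    refine ⟨by linarith, by linarith, by linarith⟩
  · intro i hi
    have hEq : {x : Fin d → ℝ | ∀ t, lam t (i t) ≤ x t ∧ x t ≤ lam t (i t + 1)}
        = Set.Icc (fun t => lam t (i t)) (fun t => lam t (i t + 1)) := by
      ext x
      simp [Set.mem_Icc, Pi.le_def, forall_and]
    rw [hEq]
    have hd2 : (0:ℝ) ≤ δ / 2 := by linarith
    refine lt_of_le_of_lt (Metric.diam_le_of_forall_dist_le hd2 ?_) (by linarith)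
    intro x hx y hy
    rw [dist_pi_le_iff hd2]
    intro t
    have h1 : dist (x t) (y t) ≤ lam t (i t + 1) - lam t (i t) := by
      apply Real.dist_le_of_mem_Icc
      · exact ⟨(hx.1 t), (hx.2 t)⟩
      · exact ⟨(hy.1 t), (hy.2 t)⟩
    have h2 := (gap t (i t) (hi t)).2
    have h3 := h2hδ t
    linarith
  · exact hn
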